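/- arXiv:1402.2642 — 3 statements merged into one kernel-verified Lean document; each statement's English description precedes it below -/
import Mathlib

section
/- Assume m0, m1, m2 are not collinear. Let t = (t₁, t₂) ∈ ℝ² and suppose that either (a(t) > 0 and b̄(t) < 0), or (a(t) = 0 and b̄(t) ≤ 0). Then there is no x ∈ ℝ² with τ₂(x) = t. In particular the six tangency points ±T₀⁺, ±T₁⁺, ±T₂⁺ (where a = b̄ = 0) do not belong to the image of the TDOA map. -/
set_option maxHeartbeats 1000000 in
lemma real_part1 (u0 u1 v0 v1 y0 y1 d0 d1 d2 t1 t2 A B : ℝ)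
    (hD : u0*v1 - u1*v0 ≠ 0)
    (hd0 : d0^2 = y0^2 + y1^2) (h0 : 0 ≤ d0)
    (hd1 : d1^2 = (y0-u0)^2 + (y1-u1)^2)
    (hd2 : d2^2 = (y0-v0)^2 + (y1-v1)^2)
    (ht1 : t1 = d1 - d0) (ht2 : t2 = d2 - d0)
    (hA : A = (t2*u0 - t1*v0)^2 + (t2*u1 - t1*v1)^2 - (u0*v1 - u1*v0)^2)
    (hB : B = (t2*u0 - t1*v0)*(((v0^2+v1^2) - t2^2)*u0 - ((u0^2+u1^2) - t1^2)*v0)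
            + (t2*u1 - t1*v1)*(((v0^2+v1^2) - t2^2)*u1 - ((u0^2+u1^2) - t1^2)*v1))
    (hcase : (0 < A ∧ B < 0) ∨ (A = 0 ∧ B ≤ 0)) : False := by
  subst ht1 ht2
  have hA' : y0*u0 + y1*u1 = ((u0^2+u1^2) - (d1-d0)^2)/2 - d0*(d1-d0) := by
    linear_combination (hd1 - hd0)/2
  have hB' : y0*v0 + y1*v1 = ((v0^2+v1^2) - (d2-d0)^2)/2 - d0*(d2-d0) := by
    linear_combination (hd2 - hd0)/2
  have e : ((y0*u0+y1*u1)*v0 - (y0*v0+y1*v1)*u0)^2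
         + ((y0*u0+y1*u1)*v1 - (y0*v0+y1*v1)*u1)^2
         = d0^2 * (u0*v1 - u1*v0)^2 := by
    rw [hd0]; ring
  rw [hA', hB'] at e
  obtain ⟨Z0, hZ0def⟩ : ∃ x : ℝ,
      x = ((v0^2+v1^2) - (d2-d0)^2)*u0 - ((u0^2+u1^2) - (d1-d0)^2)*v0 := ⟨_, rfl⟩
  obtain ⟨Z1, hZ1def⟩ : ∃ x : ℝ,
      x = ((v0^2+v1^2) - (d2-d0)^2)*u1 - ((u0^2+u1^2) - (d1-d0)^2)*v1 := ⟨_, rfl⟩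
  have key : 4*A*d0^2 - 4*B*d0 + (Z0^2 + Z1^2) = 0 := by
    rw [hZ0def, hZ1def]
    linear_combination 4*e + 4*d0^2*hA - 4*d0*hB
  clear e hA' hB'
  have hZnn : 0 ≤ Z0^2 + Z1^2 := by positivity
  rcases hcase with ⟨hApos, hBneg⟩ | ⟨hA0, hBle⟩
  · rcases h0.eq_or_lt with hd0z | hd0pos
    · have hZ : Z0^2 + Z1^2 = 0 := by
        linear_combination key + (4*A*d0 - 4*B)*hd0z
      obtain ⟨hZ0sq, hZ1sq⟩ := (add_eq_zero_iff_of_nonneg (sq_nonneg Z0) (sq_nonneg Z1)).mp hZ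
      have hZ0 : Z0 = 0 := pow_eq_zero_iff two_ne_zero |>.mp hZ0sq
      have hZ1 : Z1 = 0 := pow_eq_zero_iff two_ne_zero |>.mp hZ1sq
      have e0 : ((v0^2+v1^2) - (d2-d0)^2)*u0 - ((u0^2+u1^2) - (d1-d0)^2)*v0 = 0 :=
        hZ0def ▸ hZ0
      have e1 : ((v0^2+v1^2) - (d2-d0)^2)*u1 - ((u0^2+u1^2) - (d1-d0)^2)*v1 = 0 :=
        hZ1def ▸ hZ1
      have hB0 : B = 0 := by
        linear_combination hB + ((d2-d0)*u0 - (d1-d0)*v0)*e0 + ((d2-d0)*u1 - (d1-d0)*v1)*e1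
      exact hBneg.ne hB0
    · have h1 : 0 < A * d0^2 := mul_pos hApos (pow_pos hd0pos 2)
      have h2 : B * d0 < 0 := mul_neg_of_neg_of_pos hBneg hd0pos
      linarith [key, h1, h2, hZnn]
  · have hZeq : Z0^2 + Z1^2 = 4*B*d0 := by
      linear_combination key - 4*d0^2*hA0
    have hBd : 4*B*d0 ≤ 0 := by
      have := mul_nonpos_of_nonpos_of_nonneg hBle h0
      linarith
    have hZ : Z0^2 + Z1^2 = 0 := le_antisymm (by linarith) hZnn
    obtain ⟨hZ0sq, hZ1sq⟩ := (add_eq_zero_iff_of_nonneg (sq_nonneg Z0) (sq_nonneg Z1)).mp hZ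
    have hZ0 : Z0 = 0 := pow_eq_zero_iff two_ne_zero |>.mp hZ0sq
    have hZ1 : Z1 = 0 := pow_eq_zero_iff two_ne_zero |>.mp hZ1sq
    have e0 : ((v0^2+v1^2) - (d2-d0)^2)*u0 - ((u0^2+u1^2) - (d1-d0)^2)*v0 = 0 :=
      hZ0def ▸ hZ0
    have e1 : ((v0^2+v1^2) - (d2-d0)^2)*u1 - ((u0^2+u1^2) - (d1-d0)^2)*v1 = 0 :=
      hZ1def ▸ hZ1
    have hp0 : (u0^2+u1^2) - (d1-d0)^2 = 0 := by
      have h : ((u0^2+u1^2) - (d1-d0)^2) * (u0*v1 - u1*v0) = 0 := by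
        linear_combination u1*e0 - u0*e1
      exact (mul_eq_zero.mp h).resolve_right hD
    have hq0 : (v0^2+v1^2) - (d2-d0)^2 = 0 := by
      have h : ((v0^2+v1^2) - (d2-d0)^2) * (u0*v1 - u1*v0) = 0 := by
        linear_combination v1*e0 - v0*e1
      exact (mul_eq_zero.mp h).resolve_right hD
    have hcs1 : d0*d1 = y0*(y0-u0) + y1*(y1-u1) := by
      linear_combination (hd0 + hd1 + hp0)/2
    have hcs2 : d0*d2 = y0*(y0-v0) + y1*(y1-v1) := by
      linear_combination (hd0 + hd2 + hq0)/2
    have hdet1 : (y0*u1 - y1*u0)^2 = 0 := by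
      linear_combination (-(d1^2))*hd0 - (y0^2+y1^2)*hd1
        + (d0*d1 + (y0*(y0-u0)+y1*(y1-u1)))*hcs1
    have hdet2 : (y0*v1 - y1*v0)^2 = 0 := by
      linear_combination (-(d2^2))*hd0 - (y0^2+y1^2)*hd2
        + (d0*d2 + (y0*(y0-v0)+y1*(y1-v1)))*hcs2
    have hyu : y0*u1 - y1*u0 = 0 := pow_eq_zero_iff two_ne_zero |>.mp hdet1
    have hyv : y0*v1 - y1*v0 = 0 := pow_eq_zero_iff two_ne_zero |>.mp hdet2
    have hy0 : y0 = 0 := by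
      have h : y0 * (u0*v1 - u1*v0) = 0 := by linear_combination u0*hyv - v0*hyu
      exact (mul_eq_zero.mp h).resolve_right hD
    have hy1 : y1 = 0 := by
      have h : y1 * (u0*v1 - u1*v0) = 0 := by linear_combination u1*hyv - v1*hyu
      exact (mul_eq_zero.mp h).resolve_right hD
    have hd0z : d0 = 0 := by
      have h : d0^2 = 0 := by rw [hd0, hy0, hy1]; ring
      exact pow_eq_zero_iff two_ne_zero |>.mp h
    rw [hd0z] at hp0 hq0 hA
    have ht1' : d1^2 = u0^2+u1^2 := by linear_combination -hp0
    have ht2' : d2^2 = v0^2+v1^2 := by linear_combination -hq0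
    have hE : (d2*u0 - d1*v0)^2 + (d2*u1 - d1*v1)^2 - (u0*v1-u1*v0)^2 = 0 := by
      linear_combination hA0 - hA
    have hfin : ((u0*v1 - u1*v0)^2)^2 = 0 := by
      linear_combination
        ((u0^2+u1^2)*(v0^2+v1^2) + (u0*v0+u1*v1)^2 + 2*d1*d2*(u0*v0+u1*v1)) * hE
        + (4*(u0*v0+u1*v1)^2*d1^2
           - ((u0^2+u1^2)*(v0^2+v1^2) + (u0*v0+u1*v1)^2 + 2*d1*d2*(u0*v0+u1*v1))*(u0^2+u1^2)) * ht2'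
        + (4*(u0*v0+u1*v1)^2*(v0^2+v1^2)
           - ((u0^2+u1^2)*(v0^2+v1^2) + (u0*v0+u1*v1)^2 + 2*d1*d2*(u0*v0+u1*v1))*(v0^2+v1^2)) * ht1'
    exact hD (pow_eq_zero_iff two_ne_zero |>.mp
      (pow_eq_zero_iff two_ne_zero |>.mp hfin))


lemma ip_coord (z w : EuclideanSpace ℝ (Fin 2)) :
    (inner ℝ z w : ℝ) = z 0 * w 0 + z 1 * w 1 := by
  simp [PiLp.inner_apply, RCLike.inner_apply, Fin.sum_univ_two]
  ring

lemma nsq_coord (z : EuclideanSpace ℝ (Fin 2)) : ‖z‖^2 = z 0^2 + z 1^2 := by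
  rw [← real_inner_self_eq_norm_sq, ip_coord]; ring

example (z w : EuclideanSpace ℝ (Fin 2)) (i : Fin 2) : (z - w) i = z i - w i := by
  simp

example (c : ℝ) (z w : EuclideanSpace ℝ (Fin 2)) (i : Fin 2) :
    (c • z - w) i = c * z i - w i := by simp

example (m0 m1 x u : EuclideanSpace ℝ (Fin 2)) (hu : u = m1 - m0) :
    x - m1 = (x - m0) - u := by rw [hu]; abel


lemma coll_of_det (m0 m1 m2 u v : EuclideanSpace ℝ (Fin 2))
    (hu : u = m1 - m0) (hv : v = m2 - m0)
    (h : u 0 * v 1 - u 1 * v 0 = 0) :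
    Collinear ℝ ({m0, m1, m2} : Set (EuclideanSpace ℝ (Fin 2))) := by
  by_cases hu0 : u = 0
  · have hm : m1 = m0 := by
      have : m1 - m0 = 0 := by rw [← hu, hu0]
      exact sub_eq_zero.mp this
    rw [hm, Set.insert_comm, Set.insert_idem]
    exact collinear_pair ℝ _ _
  · rw [collinear_iff_of_mem (Set.mem_insert m0 {m1, m2})]
    refine ⟨u, ?_⟩
    intro p hp
    have hS : u 0 ^2 + u 1 ^2 ≠ 0 := by
      intro hS
      apply hu0
      have h0 : u 0 = 0 := by nlinarith [sq_nonneg (u 0), sq_nonneg (u 1)]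
      have h1 : u 1 = 0 := by nlinarith [sq_nonneg (u 0), sq_nonneg (u 1)]
      ext i
      fin_cases i <;> simpa
    rcases hp with rfl | rfl | rfl
    · exact ⟨0, by simp⟩
    · refine ⟨1, ?_⟩
      have hh : p = u + m0 := by rw [hu]; abel
      simpa using hh
    · refine ⟨(u 0 * v 0 + u 1 * v 1)/(u 0^2 + u 1^2), ?_⟩
      have hveq : v = ((u 0 * v 0 + u 1 * v 1)/(u 0^2 + u 1^2)) • u := by
        ext i
        show v i = ((u 0 * v 0 + u 1 * v 1)/(u 0^2 + u 1^2)) * u i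
        fin_cases i <;>
          · simp only [Fin.zero_eta, Fin.mk_one]
            field_simp
            first
            | linear_combination (-(u 1))*h
            | linear_combination (u 0)*h
      have hh : p = ((u 0 * v 0 + u 1 * v 1)/(u 0^2 + u 1^2)) • u + m0 := by
        rw [← hveq, hv]; abel
      simpa using hh


noncomputable def tau2 (m0 m1 m2 : EuclideanSpace ℝ (Fin 2)) (x : EuclideanSpace ℝ (Fin 2)) :
    ℝ × ℝ :=
  (‖x - m1‖ - ‖x - m0‖, ‖x - m2‖ - ‖x - m0‖)

set_option maxHeartbeats 2000000 in
theorem stmt15 (m0 m1 m2 : EuclideanSpace ℝ (Fin 2))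
    (hnc : ¬ Collinear ℝ ({m0, m1, m2} : Set (EuclideanSpace ℝ (Fin 2))))
    (u v : EuclideanSpace ℝ (Fin 2)) (hu : u = m1 - m0) (hv : v = m2 - m0)
    (d10 d20 d21 : ℝ) (hd10 : d10 = ‖u‖) (hd20 : d20 = ‖v‖) (hd21 : d21 = ‖v - u‖)
    (a : ℝ × ℝ → ℝ)
    (ha : ∀ t : ℝ × ℝ, a t = ‖t.2 • u - t.1 • v‖ ^ 2 - (u 0 * v 1 - u 1 * v 0) ^ 2)
    (bbar : ℝ × ℝ → ℝ)
    (hb : ∀ t : ℝ × ℝ,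
      bbar t = (inner ℝ (t.2 • u - t.1 • v)
        ((d20 ^ 2 - t.2 ^ 2) • u - (d10 ^ 2 - t.1 ^ 2) • v) : ℝ))
    (T2p T1p T0p : ℝ × ℝ)
    (hT2 : T2p = (d10, (inner ℝ v u : ℝ) / d10))
    (hT1 : T1p = ((inner ℝ u v : ℝ) / d20, d20))
    (hT0 : T0p = ((inner ℝ u (v - u) : ℝ) / d21, (inner ℝ v (v - u) : ℝ) / d21)) :
    (∀ t : ℝ × ℝ, (0 < a t ∧ bbar t < 0) ∨ (a t = 0 ∧ bbar t ≤ 0) →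
      ¬ ∃ x : EuclideanSpace ℝ (Fin 2), tau2 m0 m1 m2 x = t) ∧
    (∀ ε : ℝ, ε = 1 ∨ ε = -1 →
      ε • T0p ∉ Set.range (tau2 m0 m1 m2) ∧
      ε • T1p ∉ Set.range (tau2 m0 m1 m2) ∧
      ε • T2p ∉ Set.range (tau2 m0 m1 m2)) := by
  have hD : u 0 * v 1 - u 1 * v 0 ≠ 0 := fun h => hnc (coll_of_det m0 m1 m2 u v hu hv h)
  have h10sq : d10^2 = (u 0)^2 + (u 1)^2 := by rw [hd10, nsq_coord]
  have h20sq : d20^2 = (v 0)^2 + (v 1)^2 := by rw [hd20, nsq_coord]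
  have h21sq : d21^2 = (v 0 - u 0)^2 + (v 1 - u 1)^2 := by
    rw [hd21, nsq_coord]; simp
  have hd10ne : d10 ≠ 0 := by
    intro h
    apply hD
    have hS : (u 0)^2 + (u 1)^2 = 0 := by rw [← h10sq, h]; ring
    have h0 : u 0 = 0 := by nlinarith [sq_nonneg (u 0), sq_nonneg (u 1)]
    have h1 : u 1 = 0 := by nlinarith [sq_nonneg (u 0), sq_nonneg (u 1)]
    rw [h0, h1]; ring
  have hd20ne : d20 ≠ 0 := by
    intro h
    apply hD
    have hS : (v 0)^2 + (v 1)^2 = 0 := by rw [← h20sq, h]; ring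
    have h0 : v 0 = 0 := by nlinarith [sq_nonneg (v 0), sq_nonneg (v 1)]
    have h1 : v 1 = 0 := by nlinarith [sq_nonneg (v 0), sq_nonneg (v 1)]
    rw [h0, h1]; ring
  have hd21ne : d21 ≠ 0 := by
    intro h
    apply hD
    have hS : (v 0 - u 0)^2 + (v 1 - u 1)^2 = 0 := by rw [← h21sq, h]; ring
    have h0 : v 0 - u 0 = 0 := by nlinarith [sq_nonneg (v 0 - u 0), sq_nonneg (v 1 - u 1)]
    have h1 : v 1 - u 1 = 0 := by nlinarith [sq_nonneg (v 0 - u 0), sq_nonneg (v 1 - u 1)]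
    have e0 : v 0 = u 0 := by linarith
    have e1 : v 1 = u 1 := by linarith
    rw [e0, e1]; ring
  have haC : ∀ t : ℝ × ℝ, a t = (t.2*(u 0) - t.1*(v 0))^2 + (t.2*(u 1) - t.1*(v 1))^2
      - ((u 0)*(v 1) - (u 1)*(v 0))^2 := by
    intro t
    rw [ha t, nsq_coord]
    have c0 : (t.2 • u - t.1 • v) 0 = t.2 * u 0 - t.1 * v 0 := by simp
    have c1 : (t.2 • u - t.1 • v) 1 = t.2 * u 1 - t.1 * v 1 := by simp
    rw [c0, c1]
  have hbC : ∀ t : ℝ × ℝ, bbar t = (t.2*(u 0) - t.1*(v 0))*((d20^2 - t.2^2)*(u 0) - (d10^2 - t.1^2)*(v 0))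
      + (t.2*(u 1) - t.1*(v 1))*((d20^2 - t.2^2)*(u 1) - (d10^2 - t.1^2)*(v 1)) := by
    intro t
    rw [hb t, ip_coord]
    have c0 : (t.2 • u - t.1 • v) 0 = t.2 * u 0 - t.1 * v 0 := by simp
    have c1 : (t.2 • u - t.1 • v) 1 = t.2 * u 1 - t.1 * v 1 := by simp
    have d0 : ((d20 ^ 2 - t.2 ^ 2) • u - (d10 ^ 2 - t.1 ^ 2) • v) 0
        = (d20^2 - t.2^2) * u 0 - (d10^2 - t.1^2) * v 0 := by simp
    have d1 : ((d20 ^ 2 - t.2 ^ 2) • u - (d10 ^ 2 - t.1 ^ 2) • v) 1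
        = (d20^2 - t.2^2) * u 1 - (d10^2 - t.1^2) * v 1 := by simp
    rw [c0, c1, d0, d1]
  have main : ∀ t : ℝ × ℝ, (0 < a t ∧ bbar t < 0) ∨ (a t = 0 ∧ bbar t ≤ 0) →
      ¬ ∃ x : EuclideanSpace ℝ (Fin 2), tau2 m0 m1 m2 x = t := by
    rintro t ht ⟨x, hx⟩
    have hxm1 : x - m1 = (x - m0) - u := by rw [hu]; abel
    have hxm2 : x - m2 = (x - m0) - v := by rw [hv]; abel
    have ht1 : t.1 = ‖x - m1‖ - ‖x - m0‖ := by rw [← hx]; rfl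
    have ht2 : t.2 = ‖x - m2‖ - ‖x - m0‖ := by rw [← hx]; rfl
    refine real_part1 (u 0) (u 1) (v 0) (v 1) ((x - m0) 0) ((x - m0) 1)
      ‖x - m0‖ ‖x - m1‖ ‖x - m2‖ t.1 t.2 (a t) (bbar t) hD
      (nsq_coord _) (norm_nonneg _) ?_ ?_ ht1 ht2 ?_ ?_ ht
    · rw [hxm1, nsq_coord]; simp
    · rw [hxm2, nsq_coord]; simp
    · exact haC t
    · rw [hbC t, h10sq, h20sq]
  refine ⟨main, ?_⟩
  rintro ε hε
  have hεsq : ε^2 = 1 := by rcases hε with h | h <;> rw [h] <;> norm_num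
  have hnot2 : ε • T2p ∉ Set.range (tau2 m0 m1 m2) := by
    obtain ⟨s2, hs2def⟩ : ∃ x : ℝ, x = ε * ((v 0 * u 0 + v 1 * u 1) / d10) := ⟨_, rfl⟩
    have hrel : s2 * d10 = ε * ((u 0)*(v 0) + (u 1)*(v 1)) := by
      rw [hs2def]; linear_combination ε * div_mul_cancel₀ (v 0 * u 0 + v 1 * u 1) hd10ne
    have hiv1 : (inner ℝ v u : ℝ) = v 0 * u 0 + v 1 * u 1 := ip_coord v u
    have hpt : ε • T2p = ((ε * d10, s2) : ℝ × ℝ) := by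
      rw [hT2]
      simp only [hiv1, Prod.smul_mk, smul_eq_mul, hs2def]
    have hAv : a (ε • T2p) = (s2*(u 0) - (ε*d10)*(v 0))^2 + (s2*(u 1) - (ε*d10)*(v 1))^2 - ((u 0)*(v 1) - (u 1)*(v 0))^2 := by
      rw [hpt, haC]
    have hBv : bbar (ε • T2p) = (s2*(u 0) - (ε*d10)*(v 0))*((d20^2 - s2^2)*(u 0) - (d10^2 - (ε*d10)^2)*(v 0)) + (s2*(u 1) - (ε*d10)*(v 1))*((d20^2 - s2^2)*(u 1) - (d10^2 - (ε*d10)^2)*(v 1)) := by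
      rw [hpt, hbC]
    have hGA : d10^2 * ((s2*(u 0) - (ε*d10)*(v 0))^2 + (s2*(u 1) - (ε*d10)*(v 1))^2 - ((u 0)*(v 1) - (u 1)*(v 0))^2) = 0 := by
      linear_combination (-2*(u 1)*(v 1)*d10^2*ε + (u 1)^2*d10*s2 + (u 1)^3*(v 1)*ε + -2*(u 0)*(v 0)*d10^2*ε + (u 0)*(u 1)^2*(v 0)*ε + (u 0)^2*d10*s2 + (u 0)^2*(u 1)*(v 1)*ε + (u 0)^3*(v 0)*ε) * hrel + ((v 1)^2*d10^2*ε^2 + (v 0)^2*d10^2*ε^2 + -1*(u 1)^2*(v 1)^2*ε^2 + -1*(u 1)^2*(v 0)^2 + (u 1)^2*(v 0)^2*ε^2 + 2*(u 0)*(u 1)*(v 0)*(v 1) + -4*(u 0)*(u 1)*(v 0)*(v 1)*ε^2 + -1*(u 0)^2*(v 1)^2 + (u 0)^2*(v 1)^2*ε^2 + -1*(u 0)^2*(v 0)^2*ε^2) * h10sq + ((u 1)^4*(v 0)^2 + -2*(u 0)*(u 1)^3*(v 0)*(v 1) + (u 0)^2*(u 1)^2*(v 1)^2 + (u 0)^2*(u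 1)^2*(v 0)^2 + -2*(u 0)^3*(u 1)*(v 0)*(v 1) + (u 0)^4*(v 1)^2) * hεsq
    have hGB : d10^3 * ((s2*(u 0) - (ε*d10)*(v 0))*((d20^2 - s2^2)*(u 0) - (d10^2 - (ε*d10)^2)*(v 0)) + (s2*(u 1) - (ε*d10)*(v 1))*((d20^2 - s2^2)*(u 1) - (d10^2 - (ε*d10)^2)*(v 1))) = 0 := by
      linear_combination ((u 1)*(v 1)*d10^3*ε*s2 + -1*(u 1)*(v 1)*d10^4 + (u 1)*(v 1)*d10^4*ε^2 + -1*(u 1)^2*d10^2*s2^2 + (u 1)^2*d10^2*d20^2 + (u 1)^2*(v 1)^2*d10^2*ε^2 + -1*(u 1)^3*(v 1)*d10*ε*s2 + -1*(u 1)^4*(v 1)^2*ε^2 + (u 0)*(v 0)*d10^3*ε*s2 + -1*(u 0)*(v 0)*d10^4 + (u 0)*(v 0)*d10^4*ε^2 + 2*(u 0)*(u 1)*(v 0)*(v 1)*d10^2*ε^2 + -1*(u 0)*(u 1)^2*(v 0)*d10*ε*s2 + -2*(u 0)*(u 1)^3*(v 0)*(v 1)*ε^2 + -1*(u 0)^2*d10^2*s2^2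 + (u 0)^2*d10^2*d20^2 + (u 0)^2*(v 0)^2*d10^2*ε^2 + -1*(u 0)^2*(u 1)*(v 1)*d10*ε*s2 + -1*(u 0)^2*(u 1)^2*(v 1)^2*ε^2 + -1*(u 0)^2*(u 1)^2*(v 0)^2*ε^2 + -1*(u 0)^3*(v 0)*d10*ε*s2 + -2*(u 0)^3*(u 1)*(v 0)*(v 1)*ε^2 + -1*(u 0)^4*(v 0)^2*ε^2) * hrel + ((v 1)^2*d10^4*ε + -1*(v 1)^2*d10^4*ε^3 + (v 0)^2*d10^4*ε + -1*(v 0)^2*d10^4*ε^3 + -1*(u 1)*(v 1)*d10^2*d20^2*ε + (u 1)^2*(v 0)^2*d10^2*ε + -1*(u 1)^2*(v 0)^2*d10^2*ε^3 + (u 1)^3*(v 1)^3*ε^3 + (u 1)^4*(v 0)^2*ε + -1*(u 1)^4*(v 0)^2*ε^3 + -1*(u 0)*(v 0)*d10^2*d20^2*ε + -2*(u 0)*(u 1)*(v 0)*(v 1)*d10^2*ε + 2*(u 0)*(u 1)*(v 0)*(v 1)*d10^2*ε^3 + 3*(u 0)*(u 1)^2*(v 0)*(v 1)^2*ε^3 +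 -2*(u 0)*(u 1)^3*(v 0)*(v 1)*ε + 2*(u 0)*(u 1)^3*(v 0)*(v 1)*ε^3 + (u 0)^2*(v 1)^2*d10^2*ε + -1*(u 0)^2*(v 1)^2*d10^2*ε^3 + 3*(u 0)^2*(u 1)*(v 0)^2*(v 1)*ε^3 + (u 0)^2*(u 1)^2*(v 1)^2*ε + -1*(u 0)^2*(u 1)^2*(v 1)^2*ε^3 + (u 0)^2*(u 1)^2*(v 0)^2*ε + -1*(u 0)^2*(u 1)^2*(v 0)^2*ε^3 + (u 0)^3*(v 0)^3*ε^3 + -2*(u 0)^3*(u 1)*(v 0)*(v 1)*ε + 2*(u 0)^3*(u 1)*(v 0)*(v 1)*ε^3 + (u 0)^4*(v 1)^2*ε + -1*(u 0)^4*(v 1)^2*ε^3) * h10sq + (-1*(u 1)^6*(v 0)^2*ε + 2*(u 0)*(u 1)^5*(v 0)*(v 1)*ε + -1*(u 0)^2*(u 1)^4*(v 1)^2*ε + -2*(u 0)^2*(u 1)^4*(v 0)^2*ε + 4*(u 0)^3*(u 1)^3*(v 0)*(v 1)*ε + -2*(u 0)^4*(u 1)^2*(v 1)^2*ε + -1*(u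 0)^4*(u 1)^2*(v 0)^2*ε + 2*(u 0)^5*(u 1)*(v 0)*(v 1)*ε + -1*(u 0)^6*(v 1)^2*ε) * hεsq
    have hA0 : a (ε • T2p) = 0 := by
      rw [hAv]; exact (mul_eq_zero.mp hGA).resolve_left (pow_ne_zero 2 hd10ne)
    have hB0 : bbar (ε • T2p) = 0 := by
      rw [hBv]; exact (mul_eq_zero.mp hGB).resolve_left (pow_ne_zero 3 hd10ne)
    rintro ⟨x, hx⟩
    exact main _ (Or.inr ⟨hA0, hB0.le⟩) ⟨x, hx⟩

  have hnot1 : ε • T1p ∉ Set.range (tau2 m0 m1 m2) := by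
    obtain ⟨s1, hs1def⟩ : ∃ x : ℝ, x = ε * ((u 0 * v 0 + u 1 * v 1) / d20) := ⟨_, rfl⟩
    have hrel : s1 * d20 = ε * ((u 0)*(v 0) + (u 1)*(v 1)) := by
      rw [hs1def]; linear_combination ε * div_mul_cancel₀ (u 0 * v 0 + u 1 * v 1) hd20ne
    have hiv1 : (inner ℝ u v : ℝ) = u 0 * v 0 + u 1 * v 1 := ip_coord u v
    have hpt : ε • T1p = ((s1, ε * d20) : ℝ × ℝ) := by
      rw [hT1]
      simp only [hiv1, Prod.smul_mk, smul_eq_mul, hs1def]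
    have hAv : a (ε • T1p) = ((ε*d20)*(u 0) - s1*(v 0))^2 + ((ε*d20)*(u 1) - s1*(v 1))^2 - ((u 0)*(v 1) - (u 1)*(v 0))^2 := by
      rw [hpt, haC]
    have hBv : bbar (ε • T1p) = ((ε*d20)*(u 0) - s1*(v 0))*((d20^2 - (ε*d20)^2)*(u 0) - (d10^2 - s1^2)*(v 0)) + ((ε*d20)*(u 1) - s1*(v 1))*((d20^2 - (ε*d20)^2)*(u 1) - (d10^2 - s1^2)*(v 1)) := by
      rw [hpt, hbC]
    have hGA : d20^2 * (((ε*d20)*(u 0) - s1*(v 0))^2 + ((ε*d20)*(u 1) - s1*(v 1))^2 - ((u 0)*(v 1) - (u 1)*(v 0))^2) = 0 := by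
      linear_combination ((v 1)^2*d20*s1 + (v 0)^2*d20*s1 + -2*(u 1)*(v 1)*d20^2*ε + (u 1)*(v 1)^3*ε + (u 1)*(v 0)^2*(v 1)*ε + -2*(u 0)*(v 0)*d20^2*ε + (u 0)*(v 0)*(v 1)^2*ε + (u 0)*(v 0)^3*ε) * hrel + ((u 1)^2*d20^2*ε^2 + -1*(u 1)^2*(v 1)^2*ε^2 + -1*(u 1)^2*(v 0)^2 + (u 1)^2*(v 0)^2*ε^2 + 2*(u 0)*(u 1)*(v 0)*(v 1) + -4*(u 0)*(u 1)*(v 0)*(v 1)*ε^2 + (u 0)^2*d20^2*ε^2 + -1*(u 0)^2*(v 1)^2 + (u 0)^2*(v 1)^2*ε^2 + -1*(u 0)^2*(v 0)^2*ε^2) * h20sq + ((u 1)^2*(v 0)^2*(v 1)^2 + (u 1)^2*(v 0)^4 + -2*(u 0)*(u 1)*(v 0)*(v 1)^3 + -2*(u 0)*(u 1)*(v 0)^3*(v 1) + (u 0)^2*(v 1)^4 + (u 0)^2*(v 0)^2*(v 1)^2) * hεsq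
    have hGB : d20^3 * (((ε*d20)*(u 0) - s1*(v 0))*((d20^2 - (ε*d20)^2)*(u 0) - (d10^2 - s1^2)*(v 0)) + ((ε*d20)*(u 1) - s1*(v 1))*((d20^2 - (ε*d20)^2)*(u 1) - (d10^2 - s1^2)*(v 1))) = 0 := by
      linear_combination (-1*(v 1)^2*d20^2*s1^2 + (v 1)^2*d10^2*d20^2 + -1*(v 0)^2*d20^2*s1^2 + (v 0)^2*d10^2*d20^2 + (u 1)*(v 1)*d20^3*ε*s1 + -1*(u 1)*(v 1)*d20^4 + (u 1)*(v 1)*d20^4*ε^2 + -1*(u 1)*(v 1)^3*d20*ε*s1 + -1*(u 1)*(v 0)^2*(v 1)*d20*ε*s1 + (u 1)^2*(v 1)^2*d20^2*ε^2 + -1*(u 1)^2*(v 1)^4*ε^2 + -1*(u 1)^2*(v 0)^2*(v 1)^2*ε^2 + (u 0)*(v 0)*d20^3*ε*s1 + -1*(u 0)*(v 0)*d20^4 + (u 0)*(v 0)*d20^4*ε^2 + -1*(u 0)*(v 0)*(v 1)^2*d20*ε*s1 + -1*(u 0)*(v 0)^3*d20*ε*s1 + 2*(u 0)*(u 1)*(v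 0)*(v 1)*d20^2*ε^2 + -2*(u 0)*(u 1)*(v 0)*(v 1)^3*ε^2 + -2*(u 0)*(u 1)*(v 0)^3*(v 1)*ε^2 + (u 0)^2*(v 0)^2*d20^2*ε^2 + -1*(u 0)^2*(v 0)^2*(v 1)^2*ε^2 + -1*(u 0)^2*(v 0)^4*ε^2) * hrel + (-1*(u 1)*(v 1)*d20^4*ε + (u 1)*(v 1)^3*d20^2*ε + (u 1)*(v 0)^2*(v 1)*d20^2*ε + -1*(u 0)*(v 0)*d20^4*ε + (u 0)*(v 0)*(v 1)^2*d20^2*ε + (u 0)*(v 0)^3*d20^2*ε) * h10sq + ((u 1)^2*d20^4*ε + -1*(u 1)^2*d20^4*ε^3 + (u 1)^2*(v 0)^2*d20^2*ε + -1*(u 1)^2*(v 0)^2*d20^2*ε^3 + (u 1)^2*(v 0)^2*(v 1)^2*ε + -1*(u 1)^2*(v 0)^2*(v 1)^2*ε^3 + (u 1)^2*(v 0)^4*ε + -1*(u 1)^2*(v 0)^4*ε^3 + -1*(u 1)^3*(v 1)*d20^2*ε + (u 1)^3*(v 1)^3*ε^3 + -2*(u 0)*(u 1)*(v 0)*(v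 1)*d20^2*ε + 2*(u 0)*(u 1)*(v 0)*(v 1)*d20^2*ε^3 + -2*(u 0)*(u 1)*(v 0)*(v 1)^3*ε + 2*(u 0)*(u 1)*(v 0)*(v 1)^3*ε^3 + -2*(u 0)*(u 1)*(v 0)^3*(v 1)*ε + 2*(u 0)*(u 1)*(v 0)^3*(v 1)*ε^3 + -1*(u 0)*(u 1)^2*(v 0)*d20^2*ε + 3*(u 0)*(u 1)^2*(v 0)*(v 1)^2*ε^3 + (u 0)^2*d20^4*ε + -1*(u 0)^2*d20^4*ε^3 + (u 0)^2*(v 1)^2*d20^2*ε + -1*(u 0)^2*(v 1)^2*d20^2*ε^3 + (u 0)^2*(v 1)^4*ε + -1*(u 0)^2*(v 1)^4*ε^3 + (u 0)^2*(v 0)^2*(v 1)^2*ε + -1*(u 0)^2*(v 0)^2*(v 1)^2*ε^3 + -1*(u 0)^2*(u 1)*(v 1)*d20^2*ε + 3*(u 0)^2*(u 1)*(v 0)^2*(v 1)*ε^3 + -1*(u 0)^3*(v 0)*d20^2*ε + (u 0)^3*(v 0)^3*ε^3) * h20sq + (-1*(u 1)^2*(v 0)^2*(v 1)^4*ε + -2*(u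 1)^2*(v 0)^4*(v 1)^2*ε + -1*(u 1)^2*(v 0)^6*ε + 2*(u 0)*(u 1)*(v 0)*(v 1)^5*ε + 4*(u 0)*(u 1)*(v 0)^3*(v 1)^3*ε + 2*(u 0)*(u 1)*(v 0)^5*(v 1)*ε + -1*(u 0)^2*(v 1)^6*ε + -2*(u 0)^2*(v 0)^2*(v 1)^4*ε + -1*(u 0)^2*(v 0)^4*(v 1)^2*ε) * hεsq
    have hA0 : a (ε • T1p) = 0 := by
      rw [hAv]; exact (mul_eq_zero.mp hGA).resolve_left (pow_ne_zero 2 hd20ne)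
    have hB0 : bbar (ε • T1p) = 0 := by
      rw [hBv]; exact (mul_eq_zero.mp hGB).resolve_left (pow_ne_zero 3 hd20ne)
    rintro ⟨x, hx⟩
    exact main _ (Or.inr ⟨hA0, hB0.le⟩) ⟨x, hx⟩

  have hnot0 : ε • T0p ∉ Set.range (tau2 m0 m1 m2) := by
    obtain ⟨s1, hs1def⟩ : ∃ x : ℝ, x = ε * ((u 0 * (v 0 - u 0) + u 1 * (v 1 - u 1)) / d21) := ⟨_, rfl⟩
    obtain ⟨s2, hs2def⟩ : ∃ x : ℝ, x = ε * ((v 0 * (v 0 - u 0) + v 1 * (v 1 - u 1)) / d21) := ⟨_, rfl⟩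
    have hrel1 : s1 * d21 = ε * ((u 0)*((v 0) - (u 0)) + (u 1)*((v 1) - (u 1))) := by
      rw [hs1def]; linear_combination ε * div_mul_cancel₀ (u 0 * (v 0 - u 0) + u 1 * (v 1 - u 1)) hd21ne
    have hrel2 : s2 * d21 = ε * ((v 0)*((v 0) - (u 0)) + (v 1)*((v 1) - (u 1))) := by
      rw [hs2def]; linear_combination ε * div_mul_cancel₀ (v 0 * (v 0 - u 0) + v 1 * (v 1 - u 1)) hd21ne
    have hiv1 : (inner ℝ u (v - u) : ℝ) = u 0 * (v 0 - u 0) + u 1 * (v 1 - u 1) := by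
      rw [ip_coord]; simp
    have hiv2 : (inner ℝ v (v - u) : ℝ) = v 0 * (v 0 - u 0) + v 1 * (v 1 - u 1) := by
      rw [ip_coord]; simp
    have hpt : ε • T0p = ((s1, s2) : ℝ × ℝ) := by
      rw [hT0]
      simp only [hiv1, hiv2, Prod.smul_mk, smul_eq_mul, hs1def, hs2def]
    have hAv : a (ε • T0p) = (s2*(u 0) - s1*(v 0))^2 + (s2*(u 1) - s1*(v 1))^2 - ((u 0)*(v 1) - (u 1)*(v 0))^2 := by
      rw [hpt, haC]
    have hBv : bbar (ε • T0p) = (s2*(u 0) - s1*(v 0))*((d20^2 - s2^2)*(u 0) - (d10^2 - s1^2)*(v 0)) + (s2*(u 1) - s1*(v 1))*((d20^2 - s2^2)*(u 1) - (d10^2 - s1^2)*(v 1)) := by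
      rw [hpt, hbC]
    have hGA : d21^2 * ((s2*(u 0) - s1*(v 0))^2 + (s2*(u 1) - s1*(v 1))^2 - ((u 0)*(v 1) - (u 1)*(v 0))^2) = 0 := by
      linear_combination ((v 1)^2*d21*s1 + (v 0)^2*d21*s1 + -2*(u 1)*(v 1)*d21*s2 + (u 1)*(v 1)^3*ε + (u 1)*(v 0)^2*(v 1)*ε + -1*(u 1)^2*(v 1)^2*ε + -1*(u 1)^2*(v 0)^2*ε + -2*(u 0)*(v 0)*d21*s2 + (u 0)*(v 0)*(v 1)^2*ε + (u 0)*(v 0)^3*ε + -1*(u 0)^2*(v 1)^2*ε + -1*(u 0)^2*(v 0)^2*ε) * hrel1 + ((u 1)^2*d21*s2 + -1*(u 1)^2*(v 1)^2*ε + (u 1)^2*(v 0)^2*ε + (u 1)^3*(v 1)*ε + -4*(u 0)*(u 1)*(v 0)*(v 1)*ε + (u 0)*(u 1)^2*(v 0)*ε + (u 0)^2*d21*s2 + (u 0)^2*(v 1)^2*ε + -1*(u 0)^2*(v 0)^2*ε + (u 0)^2*(u 1)*(v 1)*ε + (u 0)^3*(v 0)*ε) * hrel2 + (-1*(u 1)^2*(v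 0)^2 + 2*(u 0)*(u 1)*(v 0)*(v 1) + -1*(u 0)^2*(v 1)^2) * h21sq + ((u 1)^2*(v 0)^2*(v 1)^2 + (u 1)^2*(v 0)^4 + -2*(u 1)^3*(v 0)^2*(v 1) + (u 1)^4*(v 0)^2 + -2*(u 0)*(u 1)*(v 0)*(v 1)^3 + -2*(u 0)*(u 1)*(v 0)^3*(v 1) + 4*(u 0)*(u 1)^2*(v 0)*(v 1)^2 + -2*(u 0)*(u 1)^2*(v 0)^3 + -2*(u 0)*(u 1)^3*(v 0)*(v 1) + (u 0)^2*(v 1)^4 + (u 0)^2*(v 0)^2*(v 1)^2 + -2*(u 0)^2*(u 1)*(v 1)^3 + 4*(u 0)^2*(u 1)*(v 0)^2*(v 1) + (u 0)^2*(u 1)^2*(v 1)^2 + (u 0)^2*(u 1)^2*(v 0)^2 + -2*(u 0)^3*(v 0)*(v 1)^2 + -2*(u 0)^3*(u 1)*(v 0)*(v 1) + (u 0)^4*(v 1)^2) * hεsq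
    have hGB : d21^3 * ((s2*(u 0) - s1*(v 0))*((d20^2 - s2^2)*(u 0) - (d10^2 - s1^2)*(v 0)) + (s2*(u 1) - s1*(v 1))*((d20^2 - s2^2)*(u 1) - (d10^2 - s1^2)*(v 1))) = 0 := by
      linear_combination (-1*(v 1)^2*d21^2*s1^2 + (v 1)^2*d10^2*d21^2 + -1*(v 0)^2*d21^2*s1^2 + (v 0)^2*d10^2*d21^2 + (u 1)*(v 1)*d21^2*s2^2 + (u 1)*(v 1)*d21^2*s1*s2 + -1*(u 1)*(v 1)*d20^2*d21^2 + -1*(u 1)*(v 1)^3*d21*ε*s1 + -1*(u 1)*(v 0)^2*(v 1)*d21*ε*s1 + (u 1)^2*(v 1)^2*d21*ε*s2 + (u 1)^2*(v 1)^2*d21*ε*s1 + -1*(u 1)^2*(v 1)^4*ε^2 + (u 1)^2*(v 0)^2*d21*ε*s1 + -1*(u 1)^2*(v 0)^2*(v 1)^2*ε^2 + -1*(u 1)^3*(v 1)*d21*ε*s2 + 2*(u 1)^3*(v 1)^3*ε^2 + 2*(u 1)^3*(v 0)^2*(v 1)*ε^2 + -1*(u 1)^4*(v 1)^2*ε^2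 + -1*(u 1)^4*(v 0)^2*ε^2 + (u 0)*(v 0)*d21^2*s2^2 + (u 0)*(v 0)*d21^2*s1*s2 + -1*(u 0)*(v 0)*d20^2*d21^2 + -1*(u 0)*(v 0)*(v 1)^2*d21*ε*s1 + -1*(u 0)*(v 0)^3*d21*ε*s1 + 2*(u 0)*(u 1)*(v 0)*(v 1)*d21*ε*s2 + -2*(u 0)*(u 1)*(v 0)*(v 1)^3*ε^2 + -2*(u 0)*(u 1)*(v 0)^3*(v 1)*ε^2 + -1*(u 0)*(u 1)^2*(v 0)*d21*ε*s2 + 2*(u 0)*(u 1)^2*(v 0)*(v 1)^2*ε^2 + 2*(u 0)*(u 1)^2*(v 0)^3*ε^2 + (u 0)^2*(v 1)^2*d21*ε*s1 + (u 0)^2*(v 0)^2*d21*ε*s2 + (u 0)^2*(v 0)^2*d21*ε*s1 + -1*(u 0)^2*(v 0)^2*(v 1)^2*ε^2 + -1*(u 0)^2*(v 0)^4*ε^2 + -1*(u 0)^2*(u 1)*(v 1)*d21*ε*s2 + 2*(u 0)^2*(u 1)*(v 1)^3*ε^2 + 2*(u 0)^2*(u 1)*(v 0)^2*(v 1)*ε^2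 + -2*(u 0)^2*(u 1)^2*(v 1)^2*ε^2 + -2*(u 0)^2*(u 1)^2*(v 0)^2*ε^2 + -1*(u 0)^3*(v 0)*d21*ε*s2 + 2*(u 0)^3*(v 0)*(v 1)^2*ε^2 + 2*(u 0)^3*(v 0)^3*ε^2 + -1*(u 0)^4*(v 1)^2*ε^2 + -1*(u 0)^4*(v 0)^2*ε^2) * hrel1 + (-1*(u 1)*(v 1)*d10^2*d21^2 + -1*(u 1)^2*d21^2*s2^2 + (u 1)^2*d20^2*d21^2 + -1*(u 1)^2*(v 0)^2*d21*ε*s2 + -1*(u 1)^2*(v 0)^2*(v 1)^2*ε^2 + -1*(u 1)^2*(v 0)^4*ε^2 + (u 1)^3*(v 1)^3*ε^2 + (u 1)^3*(v 0)^2*(v 1)*ε^2 + -2*(u 1)^4*(v 1)^2*ε^2 + (u 1)^5*(v 1)*ε^2 + -1*(u 0)*(v 0)*d10^2*d21^2 + 2*(u 0)*(u 1)*(v 0)*(v 1)*d21*ε*s2 + 2*(u 0)*(u 1)*(v 0)*(v 1)^3*ε^2 + 2*(u 0)*(u 1)*(v 0)^3*(v 1)*ε^2 + (u 0)*(u 1)^2*(v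 0)*(v 1)^2*ε^2 + (u 0)*(u 1)^2*(v 0)^3*ε^2 + -4*(u 0)*(u 1)^3*(v 0)*(v 1)*ε^2 + (u 0)*(u 1)^4*(v 0)*ε^2 + -1*(u 0)^2*d21^2*s2^2 + (u 0)^2*d20^2*d21^2 + -1*(u 0)^2*(v 1)^2*d21*ε*s2 + -1*(u 0)^2*(v 1)^4*ε^2 + -1*(u 0)^2*(v 0)^2*(v 1)^2*ε^2 + (u 0)^2*(u 1)*(v 1)^3*ε^2 + (u 0)^2*(u 1)*(v 0)^2*(v 1)*ε^2 + -2*(u 0)^2*(u 1)^2*(v 1)^2*ε^2 + -2*(u 0)^2*(u 1)^2*(v 0)^2*ε^2 + 2*(u 0)^2*(u 1)^3*(v 1)*ε^2 + (u 0)^3*(v 0)*(v 1)^2*ε^2 + (u 0)^3*(v 0)^3*ε^2 + -4*(u 0)^3*(u 1)*(v 0)*(v 1)*ε^2 + 2*(u 0)^3*(u 1)^2*(v 0)*ε^2 + -2*(u 0)^4*(v 0)^2*ε^2 + (u 0)^4*(u 1)*(v 1)*ε^2 + (u 0)^5*(v 0)*ε^2) * hrel2 + (-1*(u 1)^2*(v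 0)^2*d21^2*ε + 2*(u 0)*(u 1)*(v 0)*(v 1)*d21^2*ε + -1*(u 0)^2*(v 1)^2*d21^2*ε) * h10sq + ((u 1)^2*(v 0)^2*d21^2*ε + -2*(u 0)*(u 1)*(v 0)*(v 1)*d21^2*ε + (u 0)^2*(v 1)^2*d21^2*ε) * h20sq + ((u 1)^2*(v 0)^2*(v 1)^2*ε + (u 1)^2*(v 0)^4*ε + -1*(u 1)^4*(v 0)^2*ε + -2*(u 0)*(u 1)*(v 0)*(v 1)^3*ε + -2*(u 0)*(u 1)*(v 0)^3*(v 1)*ε + 2*(u 0)*(u 1)^3*(v 0)*(v 1)*ε + (u 0)^2*(v 1)^4*ε + (u 0)^2*(v 0)^2*(v 1)^2*ε + -1*(u 0)^2*(u 1)^2*(v 1)^2*ε + -1*(u 0)^2*(u 1)^2*(v 0)^2*ε + 2*(u 0)^3*(u 1)*(v 0)*(v 1)*ε + -1*(u 0)^4*(v 1)^2*ε) * h21sq + (-1*(u 1)^2*(v 0)^2*(v 1)^4*ε + -2*(u 1)^2*(v 0)^4*(v 1)^2*ε + -1*(u 1)^2*(v 0)^6*ε + 2*(u 1)^3*(v 0)^2*(v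 1)^3*ε + 2*(u 1)^3*(v 0)^4*(v 1)*ε + -2*(u 1)^5*(v 0)^2*(v 1)*ε + (u 1)^6*(v 0)^2*ε + 2*(u 0)*(u 1)*(v 0)*(v 1)^5*ε + 4*(u 0)*(u 1)*(v 0)^3*(v 1)^3*ε + 2*(u 0)*(u 1)*(v 0)^5*(v 1)*ε + -4*(u 0)*(u 1)^2*(v 0)*(v 1)^4*ε + -2*(u 0)*(u 1)^2*(v 0)^3*(v 1)^2*ε + 2*(u 0)*(u 1)^2*(v 0)^5*ε + 4*(u 0)*(u 1)^4*(v 0)*(v 1)^2*ε + -2*(u 0)*(u 1)^4*(v 0)^3*ε + -2*(u 0)*(u 1)^5*(v 0)*(v 1)*ε + -1*(u 0)^2*(v 1)^6*ε + -2*(u 0)^2*(v 0)^2*(v 1)^4*ε + -1*(u 0)^2*(v 0)^4*(v 1)^2*ε + 2*(u 0)^2*(u 1)*(v 1)^5*ε + -2*(u 0)^2*(u 1)*(v 0)^2*(v 1)^3*ε + -4*(u 0)^2*(u 1)*(v 0)^4*(v 1)*ε + -2*(u 0)^2*(u 1)^3*(v 1)^3*ε + 2*(u 0)^2*(u 1)^3*(v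 0)^2*(v 1)*ε + (u 0)^2*(u 1)^4*(v 1)^2*ε + 2*(u 0)^2*(u 1)^4*(v 0)^2*ε + 2*(u 0)^3*(v 0)*(v 1)^4*ε + 2*(u 0)^3*(v 0)^3*(v 1)^2*ε + 2*(u 0)^3*(u 1)^2*(v 0)*(v 1)^2*ε + -2*(u 0)^3*(u 1)^2*(v 0)^3*ε + -4*(u 0)^3*(u 1)^3*(v 0)*(v 1)*ε + -2*(u 0)^4*(u 1)*(v 1)^3*ε + 4*(u 0)^4*(u 1)*(v 0)^2*(v 1)*ε + 2*(u 0)^4*(u 1)^2*(v 1)^2*ε + (u 0)^4*(u 1)^2*(v 0)^2*ε + -2*(u 0)^5*(v 0)*(v 1)^2*ε + -2*(u 0)^5*(u 1)*(v 0)*(v 1)*ε + (u 0)^6*(v 1)^2*ε) * hεsq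
    have hA0 : a (ε • T0p) = 0 := by
      rw [hAv]; exact (mul_eq_zero.mp hGA).resolve_left (pow_ne_zero 2 hd21ne)
    have hB0 : bbar (ε • T0p) = 0 := by
      rw [hBv]; exact (mul_eq_zero.mp hGB).resolve_left (pow_ne_zero 3 hd21ne)
    rintro ⟨x, hx⟩
    exact main _ (Or.inr ⟨hA0, hB0.le⟩) ⟨x, hx⟩

  exact ⟨hnot0, hnot1, hnot2⟩
end

section
/- Assume m1 ≠ m0 and m2 − m0 = k·(m1 − m0) for some real k ∉ {0, 1}, and let d10 = ‖m1 − m0‖. Let t = (t₁, t₂) ∈ ℝ² with t₂ = k·t₁. In ℝ³ define the Minkowski bilinear form η((u₁,u₂,u₃),(w₁,w₂,w₃)) = u₁w₁ + u₂w₂ − u₃w₃, set M₀ = (m0, 0), M_i(t) = (m_i, t_i) for i = 1,2, D_i = M_i(t) − M₀, and Π_i(t) = {X ∈ ℝ³ : η(D_i, X − M₀) = ½·η(D_i, D_i)}. Then: if t₁² ≠ d10², then Π₁(t) ∩ Π₂(t) = ∅; and if t₁² = d10², then Π₁(t) = Π₂(t) and M₀ ∈ Π₁(t). -/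
theorem stmt17 (m0 m1 m2 : EuclideanSpace ℝ (Fin 2)) (k : ℝ)
    (hk0 : k ≠ 0) (hk1 : k ≠ 1) (hne : m1 ≠ m0)
    (hcol : m2 - m0 = k • (m1 - m0))
    (d10 : ℝ) (hd10 : d10 = ‖m1 - m0‖)
    (t1 t2 : ℝ) (ht : t2 = k * t1)
    (eta : (EuclideanSpace ℝ (Fin 2) × ℝ) → (EuclideanSpace ℝ (Fin 2) × ℝ) → ℝ)
    (heta : ∀ p q : EuclideanSpace ℝ (Fin 2) × ℝ, eta p q = (inner ℝ p.1 q.1 : ℝ) - p.2 * q.2)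
    (Pi1 Pi2 : Set (EuclideanSpace ℝ (Fin 2) × ℝ))
    (hPi1 : Pi1 = {X : EuclideanSpace ℝ (Fin 2) × ℝ |
      eta (m1 - m0, t1) (X - (m0, 0)) = eta (m1 - m0, t1) (m1 - m0, t1) / 2})
    (hPi2 : Pi2 = {X : EuclideanSpace ℝ (Fin 2) × ℝ |
      eta (m2 - m0, t2) (X - (m0, 0)) = eta (m2 - m0, t2) (m2 - m0, t2) / 2}) :
    (t1 ^ 2 ≠ d10 ^ 2 → Pi1 ∩ Pi2 = ∅) ∧
    (t1 ^ 2 = d10 ^ 2 → Pi1 = Pi2 ∧ ((m0, 0) : EuclideanSpace ℝ (Fin 2) × ℝ) ∈ Pi1) := by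
  -- scale lemma: eta of D₂ against anything is k times eta of D₁
  have hscale : ∀ q : EuclideanSpace ℝ (Fin 2) × ℝ,
      eta (m2 - m0, t2) q = k * eta (m1 - m0, t1) q := by
    intro q
    rw [heta, heta]
    simp only [hcol, ht]
    rw [real_inner_smul_left]
    ring
  have hscale2 : eta (m1 - m0, t1) (m2 - m0, t2) = k * eta (m1 - m0, t1) (m1 - m0, t1) := by
    rw [heta, heta]
    simp only [hcol, ht]
    rw [real_inner_smul_right]
    ring
  have hc : eta (m1 - m0, t1) (m1 - m0, t1) = d10 ^ 2 - t1 ^ 2 := by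
    rw [heta]
    simp only [hd10]
    rw [real_inner_self_eq_norm_sq]
    ring
  have hPi2' : Pi2 = {X : EuclideanSpace ℝ (Fin 2) × ℝ |
      eta (m1 - m0, t1) (X - (m0, 0)) = k * (eta (m1 - m0, t1) (m1 - m0, t1) / 2)} := by
    rw [hPi2]
    ext X
    simp only [Set.mem_setOf_eq, hscale, hscale2]
    constructor
    · intro h
      field_simp at h ⊢
      rcases mul_left_cancel₀ hk0 (by linear_combination k * h : k * (2 * eta (m1-m0,t1) (X - (m0,0))) = k * (k * eta (m1-m0,t1) (m1-m0,t1))) with h'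
      linarith
    · intro h
      rw [h]; ring
  constructor
  · intro hne2
    ext X
    simp only [Set.mem_inter_iff, Set.mem_empty_iff_false, iff_false, not_and]
    intro h1 h2
    rw [hPi1] at h1
    rw [hPi2'] at h2
    simp only [Set.mem_setOf_eq] at h1 h2
    rw [h1, hc] at h2
    have : (d10 ^ 2 - t1 ^ 2) * (1 - k) = 0 := by linarith
    rcases mul_eq_zero.1 this with h | h
    · exact hne2 (by linarith)
    · exact hk1 (by linarith)
  · intro heq
    have hc0 : eta (m1 - m0, t1) (m1 - m0, t1) = 0 := by rw [hc]; linarith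
    constructor
    · rw [hPi1, hPi2', hc0]
      simp
    · rw [hPi1]
      simp only [Set.mem_setOf_eq, hc0, sub_self]
      rw [heta]
      simp
end

section
/- Assume m1 ≠ m0 and m2 − m0 = k·(m1 − m0) for some real k ∉ {0, 1}; let σ = sign(k), d10 = ‖m1 − m0‖, d20 = ‖m2 − m0‖, let r be the affine line through m0 and m1, let r⁰ be the smallest closed segment of r containing m0, m1, m2, and let int(r⁰) denote the corresponding open segment. Then for x ∈ ℝ²: τ₂(x) = (d10, σ·d20) if and only if x ∈ r, x ∉ int(r⁰), and ⟨x − m0, m1 − m0⟩ ≤ 0; and τ₂(x) = (−d10, −σ·d20) if and only if x ∈ r, x ∉ int(r⁰), and ⟨x − m0, m1 − m0⟩ > 0. -/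
private lemma abs_char_le (c t : ℝ) (hc : c ≠ 0) : |t - c| - |t| = c ↔ t ≤ min 0 c := by
  rcases hc.lt_or_gt with h | h
  · rw [min_eq_right h.le]
    rcases abs_cases t with ⟨h1, h2⟩ | ⟨h1, h2⟩ <;>
      rcases abs_cases (t - c) with ⟨h3, h4⟩ | ⟨h3, h4⟩ <;>
      constructor <;> intro hh <;> linarith
  · rw [min_eq_left h.le]
    rcases abs_cases t with ⟨h1, h2⟩ | ⟨h1, h2⟩ <;>
      rcases abs_cases (t - c) with ⟨h3, h4⟩ | ⟨h3, h4⟩ <;>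
      constructor <;> intro hh <;> linarith

private lemma abs_char_ge (c t : ℝ) (hc : c ≠ 0) : |t - c| - |t| = -c ↔ max 0 c ≤ t := by
  rcases hc.lt_or_gt with h | h
  · rw [max_eq_left h.le]
    rcases abs_cases t with ⟨h1, h2⟩ | ⟨h1, h2⟩ <;>
      rcases abs_cases (t - c) with ⟨h3, h4⟩ | ⟨h3, h4⟩ <;>
      constructor <;> intro hh <;> linarith
  · rw [max_eq_right h.le]
    rcases abs_cases t with ⟨h1, h2⟩ | ⟨h1, h2⟩ <;>
      rcases abs_cases (t - c) with ⟨h3, h4⟩ | ⟨h3, h4⟩ <;>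
      constructor <;> intro hh <;> linarith

private lemma aux_intrIcc {a b : ℝ} (h : a < b) :
    intrinsicInterior ℝ (Set.Icc a b) = Set.Ioo a b := by
  have hspan : affineSpan ℝ (Set.Icc a b) = ⊤ := by
    rw [eq_top_iff]
    intro z _
    have hz : z = ((z - a) / (b - a)) • (b -ᵥ a) +ᵥ a := by
      have hba : b - a ≠ 0 := sub_ne_zero.mpr h.ne'
      rw [vsub_eq_sub, vadd_eq_add, smul_eq_mul, div_mul_cancel₀ _ hba]
      ring
    have hmem : z ∈ line[ℝ, a, b] := by
      rw [hz]; exact smul_vsub_vadd_mem_affineSpan_pair _ a b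
    have hsub : ({a, b} : Set ℝ) ⊆ Set.Icc a b := by
      intro w hw
      rcases hw with rfl | hw
      · exact Set.left_mem_Icc.mpr h.le
      · rw [Set.mem_singleton_iff] at hw; subst hw
        exact Set.right_mem_Icc.mpr h.le
    exact affineSpan_mono ℝ hsub hmem
  refine subset_antisymm ?_ ?_
  · intro y hy
    obtain ⟨z, hz, rfl⟩ := hy
    have hopen : IsOpen ((affineSpan ℝ (Set.Icc a b) : Set ℝ)) := by
      rw [hspan, AffineSubspace.top_coe]; exact isOpen_univ
    have hmap := hopen.isOpenMap_subtype_val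
    have himg := hmap.image_interior_subset
      ((Subtype.val : (affineSpan ℝ (Set.Icc a b) : Set ℝ) → ℝ) ⁻¹' Set.Icc a b)
    have hy' : (z : ℝ) ∈ interior (Subtype.val ''
        ((Subtype.val : (affineSpan ℝ (Set.Icc a b) : Set ℝ) → ℝ) ⁻¹' Set.Icc a b)) :=
      himg ⟨z, hz, rfl⟩
    rw [Subtype.image_preimage_coe] at hy'
    rw [← interior_Icc]
    have : (affineSpan ℝ (Set.Icc a b) : Set ℝ) ∩ Set.Icc a b = Set.Icc a b := by
      rw [hspan, AffineSubspace.top_coe, Set.univ_inter]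
    rwa [this] at hy'
  · rw [← interior_Icc]; exact interior_subset_intrinsicInterior

noncomputable def lineIso (m0 u : EuclideanSpace ℝ (Fin 2)) (hu : ‖u‖ = 1) :
    ℝ →ᵃⁱ[ℝ] EuclideanSpace ℝ (Fin 2) :=
  { toAffineMap :=
      { toFun := fun s => m0 + s • u
        linear := LinearMap.toSpanSingleton ℝ _ u
        map_vadd' := by
          intro p w
          simp only [LinearMap.toSpanSingleton_apply, vadd_eq_add, add_smul]
          abel }
    norm_map := by
      intro s
      simp only [LinearMap.toSpanSingleton_apply, norm_smul, hu, mul_one, Real.norm_eq_abs] }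

@[simp] lemma lineIso_apply (m0 u : EuclideanSpace ℝ (Fin 2)) (hu : ‖u‖ = 1) (s : ℝ) :
    lineIso m0 u hu s = m0 + s • u := rfl

set_option maxHeartbeats 1000000 in
theorem stmt18 (m0 m1 m2 : EuclideanSpace ℝ (Fin 2)) (k : ℝ)
    (hk0 : k ≠ 0) (hk1 : k ≠ 1) (hne : m1 ≠ m0)
    (hcol : m2 - m0 = k • (m1 - m0))
    (d10 d20 : ℝ) (hd10 : d10 = ‖m1 - m0‖) (hd20 : d20 = ‖m2 - m0‖)
    (σ : ℝ) (hσ : σ = Real.sign k)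
    (r : AffineSubspace ℝ (EuclideanSpace ℝ (Fin 2)))
    (hr : r = affineSpan ℝ ({m0, m1} : Set (EuclideanSpace ℝ (Fin 2))))
    (intr0 : Set (EuclideanSpace ℝ (Fin 2)))
    (hintr0 : intr0 =
      intrinsicInterior ℝ (convexHull ℝ ({m0, m1, m2} : Set (EuclideanSpace ℝ (Fin 2)))))
    (x : EuclideanSpace ℝ (Fin 2)) :
    (tau2 m0 m1 m2 x = (d10, σ * d20) ↔
      x ∈ (r : Set (EuclideanSpace ℝ (Fin 2))) ∧ x ∉ intr0 ∧
        (inner ℝ (x - m0) (m1 - m0) : ℝ) ≤ 0) ∧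
    (tau2 m0 m1 m2 x = (-d10, -(σ * d20)) ↔
      x ∈ (r : Set (EuclideanSpace ℝ (Fin 2))) ∧ x ∉ intr0 ∧
        0 < (inner ℝ (x - m0) (m1 - m0) : ℝ)) := by
  obtain ⟨v, hvdef⟩ : ∃ w : EuclideanSpace ℝ (Fin 2), w = m1 - m0 := ⟨_, rfl⟩
  have hv : v ≠ 0 := hvdef ▸ sub_ne_zero.mpr hne
  obtain ⟨n, hndef⟩ : ∃ n : ℝ, n = ‖v‖ := ⟨_, rfl⟩
  have hn : 0 < n := hndef ▸ norm_pos_iff.mpr hv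
  rw [← hvdef] at hcol
  rw [← hvdef, ← hndef] at hd10
  rw [← hvdef]
  have hm2 : m2 = m0 + k • v := by
    have h := hcol
    rw [sub_eq_iff_eq_add] at h
    rw [h]; abel
  -- algebraic identities along the line
  have hsub0 : ∀ t : ℝ, m0 + t • v - m0 = t • v := fun t => by abel
  have hsub1 : ∀ t : ℝ, m0 + t • v - m1 = (t - 1) • v := fun t => by
    rw [sub_smul, one_smul, hvdef]; abel
  have hsub2 : ∀ t : ℝ, m0 + t • v - m2 = (t - k) • v := fun t => by
    rw [hm2, sub_smul]; abel
  have hnorm0 : ∀ t : ℝ, ‖m0 + t • v - m0‖ = |t| * n := fun t => by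
    rw [hsub0, norm_smul, Real.norm_eq_abs, ← hndef]
  have hnorm1 : ∀ t : ℝ, ‖m0 + t • v - m1‖ = |t - 1| * n := fun t => by
    rw [hsub1, norm_smul, Real.norm_eq_abs, ← hndef]
  have hnorm2 : ∀ t : ℝ, ‖m0 + t • v - m2‖ = |t - k| * n := fun t => by
    rw [hsub2, norm_smul, Real.norm_eq_abs, ← hndef]
  have hd20' : ‖m2 - m0‖ = |k| * n := by
    rw [hcol, norm_smul, Real.norm_eq_abs, ← hndef]
  have hσd20 : σ * d20 = k * n := by
    rw [hσ, hd20, hd20']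
    rcases hk0.lt_or_gt with h | h
    · rw [Real.sign_of_neg h, abs_of_neg h]; ring
    · rw [Real.sign_of_pos h, abs_of_pos h]; ring
  -- line membership characterization
  have hline : ∀ y : EuclideanSpace ℝ (Fin 2),
      y ∈ affineSpan ℝ ({m0, m1} : Set (EuclideanSpace ℝ (Fin 2))) ↔
        ∃ t : ℝ, y = m0 + t • v := by
    intro y
    constructor
    · intro hy
      have hy' : (y - m0) +ᵥ m0 ∈ line[ℝ, m0, m1] := by
        have : (y - m0) +ᵥ m0 = y := by rw [vadd_eq_add]; abel
        rwa [this]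
      obtain ⟨t, ht⟩ := vadd_left_mem_affineSpan_pair.mp hy'
      rw [vsub_eq_sub, ← hvdef] at ht
      exact ⟨t, by rw [ht]; abel⟩
    · rintro ⟨t, rfl⟩
      have : m0 + t • v = t • (m1 -ᵥ m0) +ᵥ m0 := by
        rw [vsub_eq_sub, vadd_eq_add, ← hvdef]; abel
      rw [this]
      exact smul_vsub_vadd_mem_affineSpan_pair t m0 m1
  -- from first TDOA coordinate to line membership
  have honline1 : ‖x - m1‖ - ‖x - m0‖ = n → ∃ t : ℝ, x = m0 + t • v := by
    intro h
    have hd : dist x m0 + dist m0 m1 = dist x m1 := by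
      rw [dist_eq_norm, dist_eq_norm, dist_eq_norm, norm_sub_rev m0 m1, ← hvdef, ← hndef]
      linarith
    have hw := dist_add_dist_eq_iff.mp hd
    exact (hline x).mp
      (hw.collinear.mem_affineSpan_of_mem_of_ne (by simp) (by simp) (by simp) hne.symm)
  have honline2 : ‖x - m1‖ - ‖x - m0‖ = -n → ∃ t : ℝ, x = m0 + t • v := by
    intro h
    have hd : dist x m1 + dist m1 m0 = dist x m0 := by
      rw [dist_eq_norm, dist_eq_norm, dist_eq_norm, ← hvdef, ← hndef]
      linarith
    have hw := dist_add_dist_eq_iff.mp hd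
    exact (hline x).mp
      (hw.collinear.mem_affineSpan_of_mem_of_ne (by simp) (by simp) (by simp) hne.symm)
  -- inner product characterization
  have hinner : ∀ t : ℝ, (inner ℝ ((m0 + t • v) - m0) v : ℝ) = t * n ^ 2 := by
    intro t
    rw [hsub0, real_inner_smul_left, real_inner_self_eq_norm_sq, ← hndef]
  -- key equivalence 1
  have key1 : tau2 m0 m1 m2 x = (n, k * n) ↔ ∃ t : ℝ, x = m0 + t • v ∧ t ≤ min 0 k := by
    constructor
    · intro h
      rw [tau2, Prod.mk.injEq] at h
      obtain ⟨h1, h2⟩ := h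
      obtain ⟨t, rfl⟩ := honline1 h1
      refine ⟨t, rfl, ?_⟩
      rw [hnorm1, hnorm0] at h1
      rw [hnorm2, hnorm0] at h2
      have e2 : |t - k| - |t| = k := by
        apply mul_right_cancel₀ hn.ne'
        rw [sub_mul]; linarith
      exact (abs_char_le k t hk0).mp e2
    · rintro ⟨t, rfl, ht⟩
      have ht0 : t ≤ 0 := le_trans ht (min_le_left _ _)
      have e1 : |t - 1| - |t| = 1 := by
        rw [abs_char_le 1 t one_ne_zero, min_eq_left zero_le_one]; exact ht0
      have e2 : |t - k| - |t| = k := (abs_char_le k t hk0).mpr ht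
      rw [tau2, Prod.mk.injEq, hnorm0, hnorm1, hnorm2]
      constructor
      · have := congrArg (· * n) e1
        simp only [sub_mul, one_mul] at this
        linarith
      · have := congrArg (· * n) e2
        simp only [sub_mul] at this
        linarith
  -- key equivalence 2
  have key2 : tau2 m0 m1 m2 x = (-n, -(k * n)) ↔ ∃ t : ℝ, x = m0 + t • v ∧ max 1 k ≤ t := by
    constructor
    · intro h
      rw [tau2, Prod.mk.injEq] at h
      obtain ⟨h1, h2⟩ := h
      obtain ⟨t, rfl⟩ := honline2 h1
      refine ⟨t, rfl, ?_⟩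
      rw [hnorm1, hnorm0] at h1
      rw [hnorm2, hnorm0] at h2
      have e1 : |t - 1| - |t| = -1 := by
        apply mul_right_cancel₀ hn.ne'
        rw [sub_mul]; linarith
      have e2 : |t - k| - |t| = -k := by
        apply mul_right_cancel₀ hn.ne'
        rw [sub_mul]; linarith
      have c1 : (1 : ℝ) ≤ t := by
        have := (abs_char_ge 1 t one_ne_zero).mp e1
        rwa [max_eq_right zero_le_one] at this
      have c2 : max 0 k ≤ t := (abs_char_ge k t hk0).mp e2
      exact max_le c1 (le_trans (le_max_right 0 k) c2)
    · rintro ⟨t, rfl, ht⟩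
      have c1 : (1 : ℝ) ≤ t := le_trans (le_max_left 1 k) ht
      have e1 : |t - 1| - |t| = -1 := by
        rw [abs_char_ge 1 t one_ne_zero, max_eq_right zero_le_one]; exact c1
      have e2 : |t - k| - |t| = -k := by
        rw [abs_char_ge k t hk0]
        exact max_le (by linarith) (le_trans (le_max_right 1 k) ht)
      rw [tau2, Prod.mk.injEq, hnorm0, hnorm1, hnorm2]
      constructor
      · have := congrArg (· * n) e1
        simp only [sub_mul, neg_mul, one_mul] at this
        linarith
      · have := congrArg (· * n) e2
        simp only [sub_mul, neg_mul] at this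
        linarith
  -- the isometric parametrization of the line
  obtain ⟨u, hudef⟩ : ∃ u : EuclideanSpace ℝ (Fin 2), u = n⁻¹ • v := ⟨_, rfl⟩
  have hu : ‖u‖ = 1 := by
    rw [hudef, norm_smul, norm_inv, Real.norm_eq_abs, abs_of_pos hn, ← hndef,
      inv_mul_cancel₀ hn.ne']
  have F : ℝ →ᵃⁱ[ℝ] EuclideanSpace ℝ (Fin 2) := lineIso m0 u hu
  have hFt : ∀ t : ℝ, lineIso m0 u hu (t * n) = m0 + t • v := by
    intro t
    rw [lineIso_apply, hudef, smul_smul, mul_assoc, mul_inv_cancel₀ hn.ne', mul_one]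
  have hF0 : lineIso m0 u hu 0 = m0 := by
    have := hFt 0; rwa [zero_mul, zero_smul, add_zero] at this
  have hFn : lineIso m0 u hu n = m1 := by
    have := hFt 1; rw [one_mul, one_smul] at this
    rw [this, hvdef]; abel
  have hFkn : lineIso m0 u hu (k * n) = m2 := by rw [hFt k, ← hm2]
  obtain ⟨a, hadef⟩ : ∃ a : ℝ, a = min 0 k * n := ⟨_, rfl⟩
  obtain ⟨b, hbdef⟩ : ∃ b : ℝ, b = max 1 k * n := ⟨_, rfl⟩
  have hb1 : n ≤ b := by rw [hbdef]; nlinarith [le_max_left 1 k]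
  have ha0 : a ≤ 0 := by rw [hadef]; nlinarith [min_le_left 0 k]
  have hab : a < b := by rw [hadef, hbdef]; nlinarith [min_le_left 0 k, le_max_left 1 k]
  have hIcc : convexHull ℝ ({0, n, k * n} : Set ℝ) = Set.Icc a b := by
    apply subset_antisymm
    · apply convexHull_min _ (convex_Icc a b)
      have q1 : min 0 k ≤ 0 := min_le_left _ _
      have q2 : min 0 k ≤ k := min_le_right _ _
      have q3 : (1 : ℝ) ≤ max 1 k := le_max_left _ _
      have q4 : k ≤ max 1 k := le_max_right _ _
      intro z hz
      rw [Set.mem_Icc, hadef, hbdef]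
      simp only [Set.mem_insert_iff, Set.mem_singleton_iff] at hz
      rcases hz with rfl | rfl | rfl
      · exact ⟨by nlinarith, by nlinarith⟩
      · exact ⟨by nlinarith, by nlinarith⟩
      · exact ⟨by nlinarith, by nlinarith⟩
    · rw [← segment_eq_Icc hab.le]
      apply segment_subset_convexHull
      · rcases le_total (0 : ℝ) k with h | h
        · rw [hadef, min_eq_left h, zero_mul]; exact Set.mem_insert _ _
        · rw [hadef, min_eq_right h]
          exact Set.mem_insert_iff.mpr (Or.inr (Set.mem_insert_iff.mpr (Or.inr rfl)))
      · rcases le_total (1 : ℝ) k with h | h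
        · rw [hbdef, max_eq_right h]
          exact Set.mem_insert_iff.mpr (Or.inr (Set.mem_insert_iff.mpr (Or.inr rfl)))
        · rw [hbdef, max_eq_left h, one_mul]
          exact Set.mem_insert_iff.mpr (Or.inr (Set.mem_insert _ _))
  have hull : convexHull ℝ ({m0, m1, m2} : Set (EuclideanSpace ℝ (Fin 2))) =
      lineIso m0 u hu '' Set.Icc a b := by
    have h1 : ({m0, m1, m2} : Set (EuclideanSpace ℝ (Fin 2))) = lineIso m0 u hu '' {0, n, k * n} := by
      rw [Set.image_insert_eq, Set.image_insert_eq, Set.image_singleton, hF0, hFn, hFkn]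
    rw [h1, show ((lineIso m0 u hu : ℝ → EuclideanSpace ℝ (Fin 2))) = ((lineIso m0 u hu).toAffineMap : ℝ → _) from rfl,
      ← AffineMap.image_convexHull, hIcc]
  have hintr : intr0 = lineIso m0 u hu '' Set.Ioo a b := by
    rw [hintr0, hull, AffineIsometry.image_intrinsicInterior, aux_intrIcc hab]
  have hmemI : ∀ t : ℝ, (m0 + t • v ∈ intr0) ↔ (min 0 k < t ∧ t < max 1 k) := by
    intro t
    rw [hintr, ← hFt t, ((lineIso m0 u hu).injective).mem_set_image, Set.mem_Ioo, hadef, hbdef,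
      mul_comm (min 0 k) n, mul_comm (max 1 k) n, mul_comm t n,
      mul_lt_mul_iff_right₀ hn, mul_lt_mul_iff_right₀ hn]
  -- uniqueness of parametrization not needed; assemble
  constructor
  · rw [hd10, hσd20, key1]
    constructor
    · rintro ⟨t, rfl, ht⟩
      refine ⟨?_, ?_, ?_⟩
      · rw [hr]; exact (hline _).mpr ⟨t, rfl⟩
      · rw [hmemI t]
        intro ⟨h1, h2⟩
        exact absurd ht (not_le.mpr h1)
      · rw [hinner t]
        have ht0 : t ≤ 0 := le_trans ht (min_le_left _ _)
        nlinarith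
    · rintro ⟨hxr, hxi, hip⟩
      rw [hr] at hxr
      obtain ⟨t, rfl⟩ := (hline x).mp hxr
      refine ⟨t, rfl, ?_⟩
      rw [hinner t] at hip
      have ht0 : t ≤ 0 := by nlinarith [mul_pos hn hn]
      rw [hmemI t] at hxi
      by_contra hc
      push_neg at hc
      have h1 : min 0 k < t := hc
      have h2 : t < max 1 k := by
        have : (1 : ℝ) ≤ max 1 k := le_max_left _ _
        linarith
      exact hxi ⟨h1, h2⟩
  · rw [hd10, hσd20, key2]
    constructor
    · rintro ⟨t, rfl, ht⟩
      have ht1 : (1 : ℝ) ≤ t := le_trans (le_max_left 1 k) ht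
      refine ⟨?_, ?_, ?_⟩
      · rw [hr]; exact (hline _).mpr ⟨t, rfl⟩
      · rw [hmemI t]
        intro ⟨h1, h2⟩
        exact absurd ht (not_le.mpr h2)
      · rw [hinner t]
        nlinarith
    · rintro ⟨hxr, hxi, hip⟩
      rw [hr] at hxr
      obtain ⟨t, rfl⟩ := (hline x).mp hxr
      refine ⟨t, rfl, ?_⟩
      rw [hinner t] at hip
      have ht0 : 0 < t := by nlinarith [mul_pos hn hn]
      rw [hmemI t] at hxi
      by_contra hc
      push_neg at hc
      have h1 : min 0 k ≤ 0 := min_le_left _ _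
      exact hxi ⟨by linarith, hc⟩
end
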